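/- Let (α_n)_{n≥2} be a sequence of complex numbers in the open unit disc and (r_n)_{n≥2} a sequence of positive real numbers such that the closed discs cl Δ(α_n, r_n) are pairwise disjoint, each is contained in the open unit disc Δ(0,1), and the Lebesgue (area) measure of cl Δ(0,1) \ ⋃_{n=2}^∞ cl Δ(α_n, r_n) is zero. Then for every open set U containing the closed unit disc cl Δ(0,1) and every function f : ℂ → ℂ that is complex-differentiable (holomorphic) on U, one has π · f(0) = ∑_{n=2}^∞ π r_n² · f(α_n), where the series converges absolutely. -/

import Mathlib

open Metric MeasureTheory Set
open scoped Real

lemma circle_avg {c : ℂ} {ρ : ℝ} (hρ : 0 < ρ) {g : ℂ → ℂ}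
    (hg : DifferentiableOn ℂ g (closedBall c ρ)) :
    ∫ θ in (0:ℝ)..(2 * Real.pi), g (circleMap c ρ θ) = 2 * Real.pi * g c := by
  have h := hg.circleIntegral_sub_inv_smul (mem_ball_self hρ)
  rw [circleIntegral] at h
  simp only [deriv_circleMap, smul_eq_mul] at h
  have key : ∀ θ : ℝ, circleMap 0 ρ θ * Complex.I * ((circleMap c ρ θ - c)⁻¹ * g (circleMap c ρ θ))
      = Complex.I * g (circleMap c ρ θ) := by
    intro θ
    rw [circleMap_sub_center]
    have hne : circleMap 0 ρ θ ≠ 0 := circleMap_ne_center hρ.ne'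
    field_simp
  simp only [key] at h
  rw [intervalIntegral.integral_const_mul] at h
  exact mul_left_cancel₀ Complex.I_ne_zero
    (h.trans (by ring : (2 * ↑Real.pi * Complex.I : ℂ) * g c = Complex.I * (2 * Real.pi * g c)))


lemma mean_value {c : ℂ} {R : ℝ} (hR : 0 < R) {g : ℂ → ℂ}
    (hg : DifferentiableOn ℂ g (closedBall c R)) :
    ∫ z in closedBall c R, g z = ((Real.pi * R ^ 2 : ℝ) : ℂ) * g c := by
  have hsymm : ∀ p : ℝ × ℝ, Complex.polarCoord.symm p = circleMap 0 p.1 p.2 := by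
    intro p
    simp [Complex.polarCoord_symm_apply, circleMap, Complex.exp_mul_I]
  have habs : ∀ p : ℝ × ℝ, ‖circleMap 0 p.1 p.2‖ = |p.1| := by
    intro p
    simp [circleMap, Complex.norm_exp_ofReal_mul_I]
  -- step A : translate
  have hA : ∫ z in closedBall c R, g z
      = ∫ z, (closedBall (0:ℂ) R).indicator (fun w => g (c + w)) z := by
    rw [← integral_indicator (measurableSet_closedBall)]
    rw [← integral_add_left_eq_self (μ := volume)
      ((closedBall c R).indicator g) c]
    congr 1
    funext z
    by_cases hz : z ∈ closedBall (0:ℂ) R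
    · rw [indicator_of_mem hz, indicator_of_mem]
      simpa [dist_eq_norm] using hz
    · rw [indicator_of_notMem hz, indicator_of_notMem]
      intro hmem
      exact hz (by simpa [dist_eq_norm] using hmem)
  rw [hA, ← Complex.integral_comp_polarCoord_symm]
  -- step B : localize to the rectangle
  set T : Set (ℝ × ℝ) := Ioc 0 R ×ˢ Ioo (-Real.pi) Real.pi with hT
  set φ : ℝ × ℝ → ℂ := fun p => p.1 • g (c + circleMap 0 p.1 p.2) with hφ
  have hTm : MeasurableSet T := measurableSet_Ioc.prod measurableSet_Ioo
  have hB : ∀ p ∈ polarCoord.target,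
      (p.1 • (closedBall (0:ℂ) R).indicator (fun w => g (c + w)) (Complex.polarCoord.symm p))
        = T.indicator φ p := by
    intro p hp
    rcases hp with ⟨hp1, hp2⟩
    by_cases hpR : p.1 ≤ R
    · have hmem : Complex.polarCoord.symm p ∈ closedBall (0:ℂ) R := by
        rw [mem_closedBall, dist_zero_right, hsymm, habs, abs_of_pos hp1]
        exact hpR
      have hpT : p ∈ T := ⟨⟨hp1, hpR⟩, hp2⟩
      rw [indicator_of_mem hpT, indicator_of_mem hmem]
      simp only [hφ, hsymm]
    · have hpT : p ∉ T := fun h => hpR h.1.2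
      have hmem : Complex.polarCoord.symm p ∉ closedBall (0:ℂ) R := by
        rw [mem_closedBall, dist_zero_right, hsymm, habs, abs_of_pos hp1]
        exact hpR
      rw [indicator_of_notMem hpT, indicator_of_notMem hmem, smul_zero]
  rw [setIntegral_congr_fun (polarCoord.open_target.measurableSet) hB,
    setIntegral_indicator hTm,
    show polarCoord.target ∩ T = T from inter_eq_self_of_subset_right
      (prod_mono (Ioc_subset_Ioi_self) (subset_rfl))]
  -- step C : Fubini on the rectangle
  have hcm : Continuous (fun p : ℝ × ℝ => c + circleMap 0 p.1 p.2) := by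
    simp only [circleMap, zero_add]
    fun_prop
  have hcont : ContinuousOn φ (Icc 0 R ×ˢ Icc (-Real.pi) Real.pi) := by
    apply ContinuousOn.smul continuous_fst.continuousOn
    apply hg.continuousOn.comp hcm.continuousOn
    intro p hp
    rw [mem_closedBall, dist_eq_norm,
      show (fun p : ℝ × ℝ => c + circleMap 0 p.1 p.2) p - c = circleMap 0 p.1 p.2 by simp,
      habs, abs_of_nonneg hp.1.1]
    exact hp.1.2
  have hint : IntegrableOn φ T := by
    apply (hcont.integrableOn_compact (isCompact_Icc.prod isCompact_Icc)).mono_set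
    exact prod_mono Ioc_subset_Icc_self Ioo_subset_Icc_self
  rw [hT, Measure.volume_eq_prod] at hint ⊢
  rw [setIntegral_prod _ hint]
  -- step D : evaluate inner integral
  have hinner : ∀ ρ ∈ Ioc (0:ℝ) R,
      (∫ θ in Ioo (-Real.pi) Real.pi, φ (ρ, θ)) = ((2 * Real.pi * ρ : ℝ)) • g c := by
    intro ρ hρ
    have hcmap : ∀ θ : ℝ, c + circleMap 0 ρ θ = circleMap c ρ θ := by
      intro θ; simp [circleMap]
    have hper : Function.Periodic (fun θ => g (circleMap c ρ θ)) (2 * Real.pi) :=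
      (periodic_circleMap c ρ).comp g
    have h1 : (∫ θ in Ioo (-Real.pi) Real.pi, φ (ρ, θ))
        = ρ • ∫ θ in (-Real.pi)..Real.pi, g (circleMap c ρ θ) := by
      rw [intervalIntegral.integral_of_le (by linarith [Real.pi_pos] : -Real.pi ≤ Real.pi),
        ← integral_Ioc_eq_integral_Ioo, ← integral_smul]
      simp only [hφ, hcmap]
    have h2 : (∫ θ in (-Real.pi)..Real.pi, g (circleMap c ρ θ))
        = ∫ θ in (0:ℝ)..(2 * Real.pi), g (circleMap c ρ θ) := by
      have := hper.intervalIntegral_add_eq (-Real.pi) 0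
      rw [zero_add] at this
      rw [show -Real.pi + 2 * Real.pi = Real.pi by ring] at this
      exact this
    rw [h1, h2, circle_avg hρ.1 (hg.mono (closedBall_subset_closedBall hρ.2))]
    push_cast [Complex.real_smul]
    ring
  rw [setIntegral_congr_fun measurableSet_Ioc hinner, integral_smul_const,
    ← intervalIntegral.integral_of_le hR.le]
  have : (∫ ρ in (0:ℝ)..R, 2 * Real.pi * ρ) = Real.pi * R ^ 2 := by
    rw [intervalIntegral.integral_const_mul, integral_id]
    ring
  rw [this, Complex.real_smul]

/-- If pairwise disjoint closed discs `closedBall (α n) (r n)` inside the open unit disc fill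
the closed unit disc up to area measure zero, then for every function `f` holomorphic on an
open neighbourhood of the closed unit disc, `π * f 0 = ∑' n, π * r n ^ 2 * f (α n)`, the
series converging absolutely. -/
theorem pi_mul_value_at_zero_eq_tsum_of_discs_filling
    (α : ℕ → ℂ) (r : ℕ → ℝ)
    (hα : ∀ n, ‖α n‖ < 1) (hr : ∀ n, 0 < r n)
    (hdisj : ∀ m n, m ≠ n → Disjoint (closedBall (α m) (r m)) (closedBall (α n) (r n)))
    (hsub : ∀ n, closedBall (α n) (r n) ⊆ ball (0 : ℂ) 1)
    (hfill : volume (closedBall (0 : ℂ) 1 \ ⋃ n, closedBall (α n) (r n)) = 0)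
    (U : Set ℂ) (hU : IsOpen U) (hUc : closedBall (0 : ℂ) 1 ⊆ U)
    (f : ℂ → ℂ) (hf : DifferentiableOn ℂ f U) :
    HasSum (fun n => ((Real.pi * r n ^ 2 : ℝ) : ℂ) * f (α n)) ((Real.pi : ℂ) * f 0) ∧
      Summable fun n => ‖((Real.pi * r n ^ 2 : ℝ) : ℂ) * f (α n)‖ := by
  set S : Set ℂ := closedBall 0 1 with hS
  set B : ℕ → Set ℂ := fun n => closedBall (α n) (r n) with hB
  have hBS : ∀ n, B n ⊆ S := fun n => (hsub n).trans ball_subset_closedBall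
  have hUS : (⋃ n, B n) ⊆ S := Set.iUnion_subset hBS
  have hfc : ContinuousOn f S := hf.continuousOn.mono hUc
  have hm : ∀ n, MeasurableSet (B n) := fun n => measurableSet_closedBall
  have hdf : ∀ n, DifferentiableOn ℂ f (B n) := fun n =>
    hf.mono ((hBS n).trans hUc)
  have hterm : ∀ n, (∫ z in B n, f z) = ((Real.pi * r n ^ 2 : ℝ) : ℂ) * f (α n) :=
    fun n => mean_value (hr n) (hdf n)
  have hae : (⋃ n, B n) =ᵐ[volume] S := by
    rw [MeasureTheory.ae_eq_set]
    constructor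
    · rw [Set.diff_eq_empty.2 hUS]; exact measure_empty
    · exact hfill
  -- the sum of the integrals
  have hIntS : IntegrableOn f S := hfc.integrableOn_compact (isCompact_closedBall _ _)
  have hIntU : IntegrableOn f (⋃ n, B n) := hIntS.mono_set hUS
  have hSum : HasSum (fun n => ∫ z in B n, f z) ((Real.pi : ℂ) * f 0) := by
    have h := hasSum_integral_iUnion hm (fun m n h => hdisj m n h) hIntU
    have hend : (∫ z in ⋃ n, B n, f z) = (Real.pi : ℂ) * f 0 := by
      rw [setIntegral_congr_set hae, hS,
        mean_value (c := (0:ℂ)) (R := 1) one_pos (hf.mono hUc)]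
      norm_num
    rwa [hend] at h
  have hSum' : HasSum (fun n => ((Real.pi * r n ^ 2 : ℝ) : ℂ) * f (α n)) ((Real.pi : ℂ) * f 0) := by
    simpa only [hterm] using hSum
  refine ⟨hSum', ?_⟩
  -- summability of the radii series
  have hone : HasSum (fun n => ∫ z in B n, (1:ℂ)) (∫ z in ⋃ n, B n, (1:ℂ)) :=
    hasSum_integral_iUnion hm (fun m n h => hdisj m n h)
      ((integrableOn_const ((measure_mono hUS).trans_lt
        (measure_closedBall_lt_top)).ne).mono_set subset_rfl)
  have honeterm : ∀ n, (∫ z in B n, (1:ℂ)) = ((Real.pi * r n ^ 2 : ℝ) : ℂ) := by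
    intro n
    have := mean_value (hr n) (differentiableOn_const (1:ℂ) (s := B n))
    simpa only [mul_one] using this
  have hsumR : Summable (fun n => Real.pi * r n ^ 2) := by
    have : Summable (fun n => ((Real.pi * r n ^ 2 : ℝ) : ℂ)) := by
      have := hone.summable
      simpa only [honeterm] using this
    exact Complex.summable_ofReal.1 this
  -- bound f on S
  obtain ⟨M, hM⟩ := (isCompact_closedBall (0:ℂ) 1).exists_bound_of_continuousOn hfc
  refine Summable.of_nonneg_of_le (fun n => norm_nonneg _) (fun n => ?_) (hsumR.mul_right M)
  rw [norm_mul, Complex.norm_real, Real.norm_eq_abs,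
    abs_of_nonneg (by positivity : (0:ℝ) ≤ Real.pi * r n ^ 2)]
  exact mul_le_mul_of_nonneg_left
    (hM (α n) (ball_subset_closedBall (by simpa [mem_ball, dist_zero_right] using hα n)))
    (by positivity)
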